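/- Let F be a nonempty finite set, n : F → ℕ with 3 ≤ n(f) for all f ∈ F, and D : F → Multiset ℕ with 0 < d < n(f) for every d ∈ D(f). Set A := Σ_{f∈F} n(f). For δ ∈ (0,1) put a := 1 − δ and define ℰ(δ) := (1/A)·((2 + (1 − a²))/(1 − a²))·Σ_{f∈F} n(f)·(1 + a^{n(f)})/(1 − a^{n(f)}) − (1/A)·(a/(1 − a²))·Σ_{f∈F} (1/(1 − a^{n(f)}))·Σ_{d ∈ D(f)} (a^d + a^{n(f) − d}). Then δ²·ℰ(δ) tends to (1/A)·( 2·|F| − Σ_{f∈F} card(D(f))/n(f) ) as δ → 0 from the right. -/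

import Mathlib

open Filter Set

private lemma keylim (n : ℕ) (hn : 0 < n) :
    Tendsto (fun δ : ℝ => δ / (1 - (1 - δ) ^ n)) (nhdsWithin 0 (Set.Ioi 0))
      (nhds (1 / (n : ℝ))) := by
  have hq : Continuous (fun δ : ℝ => ∑ i ∈ Finset.range n, (1 - δ) ^ i) := by fun_prop
  have h0 : (∑ i ∈ Finset.range n, (1 - (0:ℝ)) ^ i) = (n : ℝ) := by simp
  have ht : Tendsto (fun δ : ℝ => 1 / (∑ i ∈ Finset.range n, (1 - δ) ^ i))
      (nhdsWithin 0 (Set.Ioi 0)) (nhds (1 / (n : ℝ))) := by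
    have hne : ((n : ℝ)) ≠ 0 := by positivity
    have := (tendsto_const_nhds (x := (1:ℝ)) (f := nhds (0:ℝ))).div
      ((hq.tendsto 0).congr (fun x => rfl)) (by rw [h0]; exact hne)
    rw [h0] at this
    exact this.mono_left nhdsWithin_le_nhds
  refine ht.congr' ?_
  filter_upwards [self_mem_nhdsWithin] with δ (hδ : δ ∈ Set.Ioi 0)
  have hne : δ ≠ 0 := ne_of_gt hδ
  have hid : 1 - (1 - δ) ^ n = δ * ∑ i ∈ Finset.range n, (1 - δ) ^ i := by
    have h := geom_sum_mul (1 - δ) n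
    linear_combination h
  rw [hid]
  have h2 := mul_div_mul_left (1:ℝ) (∑ i ∈ Finset.range n, (1 - δ) ^ i) hne
  rw [mul_one] at h2
  exact h2.symm

private lemma mslim (M : Multiset ℕ) (m : ℕ) :
    Tendsto (fun δ : ℝ => ((M.map (fun d : ℕ => (1 - δ) ^ d + (1 - δ) ^ (m - d))).sum))
      (nhdsWithin 0 (Set.Ioi 0)) (nhds (2 * (M.card : ℝ))) := by
  induction M using Multiset.induction with
  | empty => simpa using (tendsto_const_nhds : Tendsto (fun _ : ℝ => (0:ℝ)) _ _)
  | cons a s ih =>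
    simp only [Multiset.map_cons, Multiset.sum_cons, Multiset.card_cons]
    have hc : Continuous fun δ : ℝ => (1 - δ) ^ a + (1 - δ) ^ (m - a) := by fun_prop
    have h1 : Tendsto (fun δ : ℝ => (1 - δ) ^ a + (1 - δ) ^ (m - a))
        (nhdsWithin 0 (Set.Ioi 0)) (nhds 2) := by
      have h := (hc.tendsto 0).mono_left (nhdsWithin_le_nhds (s := Set.Ioi (0:ℝ)))
      norm_num at h
      exact h
    have := h1.add ih
    have heq : (2 : ℝ) + 2 * (s.card : ℝ) = 2 * ((s.card : ℝ) + 1) := by ring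
    rw [heq] at this
    convert this using 2
    push_cast
    ring

theorem stmt_12 {F : Type*} [Fintype F] [Nonempty F]
    (n : F → ℕ) (hn : ∀ f, 3 ≤ n f)
    (D : F → Multiset ℕ) (hD : ∀ f, ∀ d ∈ D f, 0 < d ∧ d < n f)
    (A : ℝ) (hA : A = ∑ f, (n f : ℝ))
    (E : ℝ → ℝ)
    (hE : ∀ δ ∈ Set.Ioo (0 : ℝ) 1, E δ =
      (1 / A) * ((2 + (1 - (1 - δ) ^ 2)) / (1 - (1 - δ) ^ 2)) *
          ∑ f, (n f : ℝ) * (1 + (1 - δ) ^ (n f)) / (1 - (1 - δ) ^ (n f))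
        - (1 / A) * ((1 - δ) / (1 - (1 - δ) ^ 2)) *
          ∑ f, (1 / (1 - (1 - δ) ^ (n f))) *
            ((D f).map (fun d : ℕ => (1 - δ) ^ d + (1 - δ) ^ (n f - d))).sum) :
    Filter.Tendsto (fun δ : ℝ => δ ^ 2 * E δ) (nhdsWithin 0 (Set.Ioi 0))
      (nhds ((1 / A) *
        (2 * (Fintype.card F : ℝ) - ∑ f, ((D f).card : ℝ) / (n f : ℝ)))) := by
  classical
  set g : ℝ → ℝ := fun δ =>
    (∑ f, (1 / A) * ((2 + (1 - (1 - δ) ^ 2)) * (δ / (1 - (1 - δ) ^ 2)) *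
        ((n f : ℝ) * (1 + (1 - δ) ^ (n f))) * (δ / (1 - (1 - δ) ^ (n f)))))
    - (∑ f, (1 / A) * ((1 - δ) * (δ / (1 - (1 - δ) ^ 2)) * (δ / (1 - (1 - δ) ^ (n f))) *
        ((D f).map (fun d : ℕ => (1 - δ) ^ d + (1 - δ) ^ (n f - d))).sum)) with hg
  have heq : (fun δ : ℝ => g δ) =ᶠ[nhdsWithin 0 (Set.Ioi 0)] (fun δ : ℝ => δ ^ 2 * E δ) := by
    have hmem : Set.Ioo (0:ℝ) 1 ∈ nhdsWithin 0 (Set.Ioi 0) := by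
      rw [show Set.Ioo (0:ℝ) 1 = Set.Ioi 0 ∩ Set.Iio 1 from rfl]
      exact Filter.inter_mem self_mem_nhdsWithin
        (nhdsWithin_le_nhds (Iio_mem_nhds (by norm_num)))
    filter_upwards [hmem] with δ hδ
    rw [hE δ hδ, hg]
    simp only [mul_sub, Finset.mul_sum]
    congr 1
    · refine Finset.sum_congr rfl fun f _ => ?_
      ring
    · refine Finset.sum_congr rfl fun f _ => ?_
      ring
  have hlim : Tendsto g (nhdsWithin 0 (Set.Ioi 0))
      (nhds ((∑ _f : F, (1 / A) * (2:ℝ)) - (∑ f, (1 / A) * (((D f).card : ℝ) / (n f : ℝ))))) := by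
    refine Filter.Tendsto.sub ?_ ?_
    · refine tendsto_finset_sum _ fun f _ => ?_
      have hnf : (0:ℝ) < (n f : ℝ) := by
        have := hn f; positivity
      have t1 : Tendsto (fun δ : ℝ => 2 + (1 - (1 - δ) ^ 2))
          (nhdsWithin 0 (Set.Ioi 0)) (nhds 2) := by
        have : Continuous fun δ : ℝ => 2 + (1 - (1 - δ) ^ 2) := by fun_prop
        have h := (this.tendsto 0).mono_left (nhdsWithin_le_nhds (s := Set.Ioi (0:ℝ)))
        simpa using h
      have t2 := keylim 2 (by norm_num)
      have t3 : Tendsto (fun δ : ℝ => (n f : ℝ) * (1 + (1 - δ) ^ (n f)))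
          (nhdsWithin 0 (Set.Ioi 0)) (nhds ((n f : ℝ) * 2)) := by
        have : Continuous fun δ : ℝ => (n f : ℝ) * (1 + (1 - δ) ^ (n f)) := by fun_prop
        have h := (this.tendsto 0).mono_left (nhdsWithin_le_nhds (s := Set.Ioi (0:ℝ)))
        norm_num at h
        exact h
      have t4 := keylim (n f) (by have := hn f; omega)
      have := (((t1.mul t2).mul t3).mul t4).const_mul (1 / A)
      have hval : (1 / A) * ((2:ℝ) * (1 / ((2:ℕ):ℝ)) * ((n f : ℝ) * 2) * (1 / (n f : ℝ)))
          = (1 / A) * 2 := by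
        field_simp
        norm_num
      rwa [hval] at this
    · refine tendsto_finset_sum _ fun f _ => ?_
      have hnf : (0:ℝ) < (n f : ℝ) := by
        have := hn f; positivity
      have t1 : Tendsto (fun δ : ℝ => (1 - δ))
          (nhdsWithin 0 (Set.Ioi 0)) (nhds 1) := by
        have : Continuous fun δ : ℝ => (1 - δ) := by fun_prop
        have h := (this.tendsto 0).mono_left (nhdsWithin_le_nhds (s := Set.Ioi (0:ℝ)))
        simpa using h
      have t2 := keylim 2 (by norm_num)
      have t4 := keylim (n f) (by have := hn f; omega)
      have t5 := mslim (D f) (n f)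
      have := (((t1.mul t2).mul t4).mul t5).const_mul (1 / A)
      have hval : (1 / A) * ((1:ℝ) * (1 / ((2:ℕ):ℝ)) * (1 / (n f : ℝ)) * (2 * ((D f).card : ℝ)))
          = (1 / A) * (((D f).card : ℝ) / (n f : ℝ)) := by
        field_simp
        ring
      rwa [hval] at this
  have hfinal : ((∑ _f : F, (1 / A) * (2:ℝ)) - (∑ f, (1 / A) * (((D f).card : ℝ) / (n f : ℝ))))
      = (1 / A) * (2 * (Fintype.card F : ℝ) - ∑ f, ((D f).card : ℝ) / (n f : ℝ)) := by
    rw [← Finset.mul_sum, ← Finset.mul_sum, ← mul_sub]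
    congr 2
    simp [Finset.sum_const, Finset.card_univ]
    ring
  rw [hfinal] at hlim
  exact Filter.Tendsto.congr' heq hlim
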